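/- Let 𝔤 be a finite-dimensional real Lie algebra with an inner product G and define R_G = −(1/4)|[·,·]|²_G. Then for any symmetric bilinear form S on 𝔤, the directional derivative of G ↦ R_G at G in direction S equals −⟨Ric_G, S⟩_G, where Ric_G(x,y) = −(1/2)Σ_i G([x,e_i],[y,e_i]) + (1/4)Σ_{i,j} G([e_i,e_j],x)G([e_i,e_j],y). -/

import Mathlib

open Matrix

namespace RFN

variable {n : ℕ}

/-- Bracket determined by structure constants: `[e i, e j] = ∑ k, c i j k • e k`. -/
def bra (c : Fin n → Fin n → Fin n → ℝ) (x y : Fin n → ℝ) : Fin n → ℝ :=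
  fun k => ∑ i, ∑ j, x i * y j * c i j k

/-- `c` is a family of structure constants of a Lie algebra. -/
def IsLieSC (c : Fin n → Fin n → Fin n → ℝ) : Prop :=
  (∀ i j k, c i j k = - c j i k) ∧
  ∀ x y z, bra c (bra c x y) z + bra c (bra c y z) x + bra c (bra c z x) y = 0

def adIter (c : Fin n → Fin n → Fin n → ℝ) (v : ℕ → Fin n → ℝ) :
    ℕ → (Fin n → ℝ) → (Fin n → ℝ)
  | 0, x => x
  | m + 1, x => bra c (v m) (adIter c v m x)

/-- Nilpotency of the Lie algebra with structure constants `c`. -/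
def IsNilpotentSC (c : Fin n → Fin n → Fin n → ℝ) : Prop :=
  ∃ N : ℕ, ∀ v x, adIter c v N x = 0

/-- Inner product of vectors with respect to the metric matrix `G`. -/
def gdot (G : Matrix (Fin n) (Fin n) ℝ) (x y : Fin n → ℝ) : ℝ :=
  ∑ i, ∑ j, x i * G i j * y j

/-- Components of the Ricci bilinear form of the invariant metric `G`:
`Ric_G(x,y) = -(1/2) Σ G([x,e_i],[y,e_j])G^{ij} + (1/4) Σ G^{ip}G^{jq}G([e_i,e_j],x)G([e_p,e_q],y)`. -/
noncomputable def Ricm (c : Fin n → Fin n → Fin n → ℝ) (G : Matrix (Fin n) (Fin n) ℝ) :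
    Matrix (Fin n) (Fin n) ℝ :=
  Matrix.of fun a b =>
    -(1/2) * (∑ i, ∑ j, G⁻¹ i j * gdot G (c a i) (c b j))
    + (1/4) * (∑ i, ∑ j, ∑ p, ∑ q, G⁻¹ i p * G⁻¹ j q *
        (∑ k, c i j k * G k a) * (∑ l, c p q l * G l b))

/-- Scalar curvature `R_G = -(1/4)|[·,·]|²_G`. -/
noncomputable def scalR (c : Fin n → Fin n → Fin n → ℝ) (G : Matrix (Fin n) (Fin n) ℝ) : ℝ :=
  -(1/4) * (∑ i, ∑ j, ∑ p, ∑ q, G⁻¹ i p * G⁻¹ j q * gdot G (c i j) (c p q))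

/-- Ricci endomorphism `Rc_G = G⁻¹ Ric_G`. -/
noncomputable def Rc (c : Fin n → Fin n → Fin n → ℝ) (G : Matrix (Fin n) (Fin n) ℝ) :
    Matrix (Fin n) (Fin n) ℝ := G⁻¹ * Ricm c G

/-- `δ(A)(e_i,e_j) = A[e_i,e_j] - [A e_i, e_j] - [e_i, A e_j]` (components). -/
def deltaE (c : Fin n → Fin n → Fin n → ℝ) (A : Matrix (Fin n) (Fin n) ℝ) :
    Fin n → Fin n → Fin n → ℝ :=
  fun i j k => (∑ l, A k l * c i j l) - (∑ l, A l i * c l j k) - (∑ l, A l j * c i l k)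

/-- The inner product on `Λ²𝔤*⊗𝔤` induced by `G` (full sum over ordered pairs). -/
noncomputable def tinner (G : Matrix (Fin n) (Fin n) ℝ) (μ ν : Fin n → Fin n → Fin n → ℝ) : ℝ :=
  ∑ i, ∑ j, ∑ p, ∑ q, G⁻¹ i p * G⁻¹ j q * gdot G (μ i j) (ν p q)

/-- The (Hilbert–Schmidt) inner product of endomorphisms induced by `G`. -/
noncomputable def einner (G : Matrix (Fin n) (Fin n) ℝ) (A B : Matrix (Fin n) (Fin n) ℝ) : ℝ :=
  ∑ i, ∑ j, G⁻¹ i j * gdot G (fun k => A k i) (fun k => B k j)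

/-- The inner product of bilinear forms induced by `G`. -/
noncomputable def binner (G : Matrix (Fin n) (Fin n) ℝ) (S T : Matrix (Fin n) (Fin n) ℝ) : ℝ :=
  ∑ i, ∑ j, ∑ p, ∑ q, G⁻¹ i p * G⁻¹ j q * S i j * T p q

/-- `|Ric_G|²`. -/
noncomputable def ric2 (c : Fin n → Fin n → Fin n → ℝ) (G : Matrix (Fin n) (Fin n) ℝ) : ℝ :=
  binner G (Ricm c G) (Ricm c G)

/-- The functional `W₊(G,τ) = τ R_G + τ² |Ric_G|²`. -/
noncomputable def Wplus (c : Fin n → Fin n → Fin n → ℝ) (G : Matrix (Fin n) (Fin n) ℝ) (τ : ℝ) : ℝ :=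
  τ * scalR c G + τ ^ 2 * ric2 c G

/-- Structure constants of the 3-dimensional Heisenberg Lie algebra: `[e₀,e₁] = e₂`, `e₂` central. -/
def heis : Fin 3 → Fin 3 → Fin 3 → ℝ := fun i j k =>
  if i = 0 ∧ j = 1 ∧ k = 2 then 1 else if i = 1 ∧ j = 0 ∧ k = 2 then -1 else 0

end RFN

open RFN Matrix

namespace RFNAux

open Matrix Finset RFN

variable {n : ℕ}

lemma diffAt_det (M : ℝ → Matrix (Fin n) (Fin n) ℝ) (t : ℝ)
    (h : ∀ i j, DifferentiableAt ℝ (fun u => M u i j) t) :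
    DifferentiableAt ℝ (fun u => (M u).det) t := by
  simp only [Matrix.det_apply']
  apply DifferentiableAt.fun_sum
  intro σ _
  exact ((DifferentiableAt.fun_finsetProd (u := Finset.univ) (fun i _ => h (σ i) i))).const_mul _

lemma diffAt_adjugate (M : ℝ → Matrix (Fin n) (Fin n) ℝ) (t : ℝ)
    (h : ∀ i j, DifferentiableAt ℝ (fun u => M u i j) t) (i j : Fin n) :
    DifferentiableAt ℝ (fun u => (M u).adjugate i j) t := by
  simp only [Matrix.adjugate_apply]
  apply diffAt_det
  intro a b
  simp only [Matrix.updateRow_apply]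
  by_cases hab : a = j
  · simp [hab]
  · simp [hab]; exact h a b

lemma diffAt_inv_entry (M : ℝ → Matrix (Fin n) (Fin n) ℝ) (t : ℝ)
    (h : ∀ i j, DifferentiableAt ℝ (fun u => M u i j) t)
    (hdet : (M t).det ≠ 0) (i j : Fin n) :
    DifferentiableAt ℝ (fun u => (M u)⁻¹ i j) t := by
  have : ∀ u, (M u)⁻¹ i j = ((M u).det)⁻¹ * (M u).adjugate i j := by
    intro u
    rw [Matrix.inv_def, Ring.inverse_eq_inv]
    simp [Matrix.smul_apply]
  simp only [this]
  exact ((diffAt_det M t h).inv hdet).mul (diffAt_adjugate M t h i j)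

lemma hasDerivAt_inv_entry (M : ℝ → Matrix (Fin n) (Fin n) ℝ) (S : Matrix (Fin n) (Fin n) ℝ)
    (t : ℝ) (h : ∀ i j, HasDerivAt (fun u => M u i j) (S i j) t)
    (hdet : ∀ u, IsUnit (M u).det) (i j : Fin n) :
    HasDerivAt (fun u => (M u)⁻¹ i j) ((-((M t)⁻¹ * S * (M t)⁻¹)) i j) t := by
  have hd : ∀ i j, DifferentiableAt ℝ (fun u => (M u)⁻¹ i j) t :=
    fun i j => diffAt_inv_entry M t (fun a b => (h a b).differentiableAt)
      (isUnit_iff_ne_zero.mp (hdet t)) i j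
  set H' : Matrix (Fin n) (Fin n) ℝ := Matrix.of fun i j => deriv (fun u => (M u)⁻¹ i j) t with hH'
  have hH : ∀ i j, HasDerivAt (fun u => (M u)⁻¹ i j) (H' i j) t := fun i j =>
    (hd i j).hasDerivAt
  have key : ∀ i j, (∑ k, (H' i k * M t k j + (M t)⁻¹ i k * S k j)) = 0 := by
    intro i j
    have h1 : HasDerivAt (fun u => ∑ k, (M u)⁻¹ i k * M u k j)
        (∑ k, (H' i k * M t k j + (M t)⁻¹ i k * S k j)) t :=
      HasDerivAt.fun_sum fun k _ => (hH i k).mul (h k j)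
    have h2 : (fun u => ∑ k, (M u)⁻¹ i k * M u k j)
        = fun _ => (1 : Matrix (Fin n) (Fin n) ℝ) i j := by
      funext u; rw [← Matrix.mul_apply, Matrix.nonsing_inv_mul _ (hdet u)]
    rw [h2] at h1
    exact (h1.unique (hasDerivAt_const t _))
  have keyM : H' * M t + (M t)⁻¹ * S = 0 := by
    ext i j
    simpa [Matrix.mul_apply, Finset.sum_add_distrib] using key i j
  have hfin : H' = -((M t)⁻¹ * S * (M t)⁻¹) := by
    have h4 : H' * M t = -((M t)⁻¹ * S) := eq_neg_of_add_eq_zero_left keyM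
    calc H' = H' * (M t * (M t)⁻¹) := by rw [Matrix.mul_nonsing_inv _ (hdet t), Matrix.mul_one]
    _ = (H' * M t) * (M t)⁻¹ := by rw [Matrix.mul_assoc]
    _ = -((M t)⁻¹ * S * (M t)⁻¹) := by rw [h4]; noncomm_ring
  rw [← hfin]
  exact hH i j

lemma sum4_perm (f : Fin n → Fin n → Fin n → Fin n → ℝ) :
    ∑ i, ∑ j, ∑ p, ∑ q, f i j p q = ∑ i, ∑ j, ∑ p, ∑ q, f j i q p := by
  rw [Finset.sum_comm]
  exact Finset.sum_congr rfl fun i _ => Finset.sum_congr rfl fun j _ => Finset.sum_comm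

lemma sum4_comm (f : Fin n → Fin n → Fin n → Fin n → ℝ) :
    ∑ a, ∑ b, ∑ p, ∑ q, f a b p q = ∑ p, ∑ q, ∑ a, ∑ b, f a b p q := by
  have h := Fintype.sum_equiv
    (⟨fun z : Fin n × Fin n × Fin n × Fin n => (z.2.2.1, z.2.2.2, z.1, z.2.1),
      fun z => (z.2.2.1, z.2.2.2, z.1, z.2.1), fun z => rfl, fun z => rfl⟩ :
      (Fin n × Fin n × Fin n × Fin n) ≃ (Fin n × Fin n × Fin n × Fin n))
    (fun z => f z.1 z.2.1 z.2.2.1 z.2.2.2)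
    (fun z => f z.2.2.1 z.2.2.2 z.1 z.2.1) (fun z => rfl)
  simpa [Fintype.sum_prod_type] using h

lemma sum6_comm (f : Fin n → Fin n → Fin n → Fin n → Fin n → Fin n → ℝ) :
    ∑ a, ∑ b, ∑ i, ∑ j, ∑ x, ∑ y, f a b i j x y
    = ∑ i, ∑ j, ∑ x, ∑ y, ∑ a, ∑ b, f a b i j x y := by
  have h := Fintype.sum_equiv
    (⟨fun z : Fin n × Fin n × Fin n × Fin n × Fin n × Fin n =>
        (z.2.2.1, z.2.2.2.1, z.2.2.2.2.1, z.2.2.2.2.2, z.1, z.2.1),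
      fun z => (z.2.2.2.2.1, z.2.2.2.2.2, z.1, z.2.1, z.2.2.1, z.2.2.2.1),
      fun z => rfl, fun z => rfl⟩ :
      (Fin n × Fin n × Fin n × Fin n × Fin n × Fin n) ≃ _)
    (fun z => f z.1 z.2.1 z.2.2.1 z.2.2.2.1 z.2.2.2.2.1 z.2.2.2.2.2)
    (fun z => f z.2.2.2.2.1 z.2.2.2.2.2 z.1 z.2.1 z.2.2.1 z.2.2.2.1) (fun z => rfl)
  simpa [Fintype.sum_prod_type] using h

/-- shuffle: reorder sums (a,b,p,q,i,j) to (a,i,b,j,q,p). -/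
lemma sum6_perm2 (f : Fin n → Fin n → Fin n → Fin n → Fin n → Fin n → ℝ) :
    ∑ a, ∑ b, ∑ p, ∑ q, ∑ i, ∑ j, f a b p q i j
    = ∑ a, ∑ i, ∑ b, ∑ j, ∑ q, ∑ p, f a b p q i j := by
  have h := Fintype.sum_equiv
    (⟨fun z : Fin n × Fin n × Fin n × Fin n × Fin n × Fin n =>
        (z.1, z.2.2.1, z.2.2.2.2.2, z.2.2.2.2.1, z.2.1, z.2.2.2.1),
      fun z => (z.1, z.2.2.2.2.1, z.2.1, z.2.2.2.2.2, z.2.2.2.1, z.2.2.1),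
      fun z => rfl, fun z => rfl⟩ :
      (Fin n × Fin n × Fin n × Fin n × Fin n × Fin n) ≃ _)
    (fun w => f w.1 w.2.2.1 w.2.2.2.2.2 w.2.2.2.2.1 w.2.1 w.2.2.2.1)
    (fun z => f z.1 z.2.1 z.2.2.1 z.2.2.2.1 z.2.2.2.2.1 z.2.2.2.2.2) (fun w => rfl)
  calc ∑ a, ∑ b, ∑ p, ∑ q, ∑ i, ∑ j, f a b p q i j
      = ∑ z : Fin n × Fin n × Fin n × Fin n × Fin n × Fin n,
          f z.1 z.2.1 z.2.2.1 z.2.2.2.1 z.2.2.2.2.1 z.2.2.2.2.2 := by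
        simp [Fintype.sum_prod_type]
    _ = ∑ w : Fin n × Fin n × Fin n × Fin n × Fin n × Fin n,
          f w.1 w.2.2.1 w.2.2.2.2.2 w.2.2.2.2.1 w.2.1 w.2.2.2.1 := h.symm
    _ = ∑ a, ∑ i, ∑ b, ∑ j, ∑ q, ∑ p, f a b p q i j := by
        simp [Fintype.sum_prod_type]

lemma contr (c : Fin n → Fin n → Fin n → ℝ) (A : Matrix (Fin n) (Fin n) ℝ)
    (hdet : IsUnit A.det) (i j p : Fin n) :
    ∑ a, A⁻¹ a p * (∑ k, c i j k * A k a) = c i j p := by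
  have hAg : ∀ k p, (∑ a, A k a * A⁻¹ a p) = if k = p then (1:ℝ) else 0 := fun k p => by
    rw [← Matrix.mul_apply, Matrix.mul_nonsing_inv _ hdet, Matrix.one_apply]
  calc ∑ a, A⁻¹ a p * (∑ k, c i j k * A k a)
      = ∑ a, ∑ k, c i j k * (A k a * A⁻¹ a p) := by
        refine Finset.sum_congr rfl fun a _ => ?_
        rw [Finset.mul_sum]; exact Finset.sum_congr rfl fun k _ => by ring
    _ = ∑ k, ∑ a, c i j k * (A k a * A⁻¹ a p) := Finset.sum_comm
    _ = ∑ k, c i j k * (∑ a, A k a * A⁻¹ a p) :=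
        Finset.sum_congr rfl fun k _ => (Finset.mul_sum _ _ _).symm
    _ = ∑ k, c i j k * (if k = p then 1 else 0) :=
        Finset.sum_congr rfl fun k _ => by rw [hAg]
    _ = c i j p := by simp

lemma hXin (c : Fin n → Fin n → Fin n → ℝ) (A : Matrix (Fin n) (Fin n) ℝ)
    (hdet : IsUnit A.det) (p q : Fin n) :
    ∑ a, ∑ b, (A⁻¹ a p * A⁻¹ b q *
      (∑ i, ∑ j, ∑ x, ∑ y, A⁻¹ i x * A⁻¹ j y *
        (∑ k, c i j k * A k a) * (∑ l, c x y l * A l b)))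
    = ∑ i, ∑ j, ∑ x, ∑ y, A⁻¹ i x * A⁻¹ j y * (c i j p * c x y q) := by
  calc ∑ a, ∑ b, (A⁻¹ a p * A⁻¹ b q *
      (∑ i, ∑ j, ∑ x, ∑ y, A⁻¹ i x * A⁻¹ j y *
        (∑ k, c i j k * A k a) * (∑ l, c x y l * A l b)))
      = ∑ a, ∑ b, ∑ i, ∑ j, ∑ x, ∑ y, (A⁻¹ a p * A⁻¹ b q *
          (A⁻¹ i x * A⁻¹ j y * (∑ k, c i j k * A k a) * (∑ l, c x y l * A l b))) := by
        simp only [Finset.mul_sum]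
    _ = ∑ i, ∑ j, ∑ x, ∑ y, ∑ a, ∑ b, (A⁻¹ a p * A⁻¹ b q *
          (A⁻¹ i x * A⁻¹ j y * (∑ k, c i j k * A k a) * (∑ l, c x y l * A l b))) :=
        sum6_comm _
    _ = ∑ i, ∑ j, ∑ x, ∑ y, A⁻¹ i x * A⁻¹ j y * (c i j p * c x y q) := by
        refine Finset.sum_congr rfl fun i _ => Finset.sum_congr rfl fun j _ =>
          Finset.sum_congr rfl fun x _ => Finset.sum_congr rfl fun y _ => ?_
        rw [← contr c A hdet i j p, ← contr c A hdet x y q]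
        rw [Finset.sum_mul_sum]
        simp only [Finset.mul_sum, Finset.sum_mul]
        exact Finset.sum_congr rfl fun a _ => Finset.sum_congr rfl fun b _ =>
          Finset.sum_congr rfl fun k _ => Finset.sum_congr rfl fun l _ => by ring

lemma keyalg (c : Fin n → Fin n → Fin n → ℝ) (hca : ∀ i j k, c i j k = - c j i k)
    (A S : Matrix (Fin n) (Fin n) ℝ) (hA : Aᵀ = A) (hdet : IsUnit A.det) :
    -(1/4) * (∑ i, ∑ j, ∑ p, ∑ q,
      (((-(A⁻¹ * S * A⁻¹)) i p * A⁻¹ j q + A⁻¹ i p * (-(A⁻¹ * S * A⁻¹)) j q)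
          * gdot A (c i j) (c p q)
        + A⁻¹ i p * A⁻¹ j q * gdot S (c i j) (c p q)))
    = -(binner A (Ricm c A) S) := by
  have hgs : ∀ i j, A⁻¹ i j = A⁻¹ j i := by
    intro i j
    have h1 : A⁻¹ᵀ = A⁻¹ := by rw [Matrix.transpose_nonsing_inv, hA]
    have h2 : A⁻¹ᵀ i j = A⁻¹ i j := by rw [h1]
    simpa [Matrix.transpose_apply] using h2.symm
  have hgsg : ∀ i p, (A⁻¹ * S * A⁻¹) i p = ∑ x, ∑ y, A⁻¹ i y * S y x * A⁻¹ x p := by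
    intro i p
    rw [Matrix.mul_apply]
    refine Finset.sum_congr rfl fun x _ => ?_
    rw [Matrix.mul_apply, Finset.sum_mul]
  have hBsym : ∀ i j p q, gdot A (c j i) (c q p) = gdot A (c i j) (c p q) := by
    intro i j p q
    simp only [gdot]
    refine Finset.sum_congr rfl fun k _ => Finset.sum_congr rfl fun l _ => ?_
    rw [hca j i k, hca q p l]; ring
  -- the pieces
  set T1 : ℝ := ∑ i, ∑ j, ∑ p, ∑ q,
      (A⁻¹ * S * A⁻¹) i p * A⁻¹ j q * gdot A (c i j) (c p q) with hT1def
  set T2 : ℝ := ∑ i, ∑ j, ∑ p, ∑ q,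
      A⁻¹ i p * (A⁻¹ * S * A⁻¹) j q * gdot A (c i j) (c p q) with hT2def
  set T3 : ℝ := ∑ i, ∑ j, ∑ p, ∑ q,
      A⁻¹ i p * A⁻¹ j q * gdot S (c i j) (c p q) with hT3def
  set XN : ℝ := ∑ a, ∑ b, ∑ p, ∑ q, A⁻¹ a p * A⁻¹ b q *
      (∑ i, ∑ j, A⁻¹ i j * gdot A (c a i) (c b j)) * S p q with hXNdef
  set XP : ℝ := ∑ a, ∑ b, ∑ p, ∑ q, A⁻¹ a p * A⁻¹ b q *
      (∑ i, ∑ j, ∑ x, ∑ y, A⁻¹ i x * A⁻¹ j y *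
        (∑ k, c i j k * A k a) * (∑ l, c x y l * A l b)) * S p q with hXPdef
  -- LHS decomposition
  have hL : (∑ i, ∑ j, ∑ p, ∑ q,
      (((-(A⁻¹ * S * A⁻¹)) i p * A⁻¹ j q + A⁻¹ i p * (-(A⁻¹ * S * A⁻¹)) j q)
          * gdot A (c i j) (c p q)
        + A⁻¹ i p * A⁻¹ j q * gdot S (c i j) (c p q)))
      = -T1 + (-T2 + T3) := by
    rw [hT1def, hT2def, hT3def]
    calc (∑ i, ∑ j, ∑ p, ∑ q,
        (((-(A⁻¹ * S * A⁻¹)) i p * A⁻¹ j q + A⁻¹ i p * (-(A⁻¹ * S * A⁻¹)) j q)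
            * gdot A (c i j) (c p q)
          + A⁻¹ i p * A⁻¹ j q * gdot S (c i j) (c p q)))
        = ∑ i, ∑ j, ∑ p, ∑ q,
          (-((A⁻¹ * S * A⁻¹) i p * A⁻¹ j q * gdot A (c i j) (c p q))
            + (-(A⁻¹ i p * (A⁻¹ * S * A⁻¹) j q * gdot A (c i j) (c p q))
              + A⁻¹ i p * A⁻¹ j q * gdot S (c i j) (c p q))) := by
          refine Finset.sum_congr rfl fun i _ => Finset.sum_congr rfl fun j _ =>
            Finset.sum_congr rfl fun p _ => Finset.sum_congr rfl fun q _ => ?_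
          simp only [Matrix.neg_apply]; ring
      _ = -T1 + (-T2 + T3) := by
          rw [hT1def, hT2def, hT3def]
          simp only [Finset.sum_add_distrib, Finset.sum_neg_distrib]
  -- T2 = T1
  have hswap : T2 = T1 := by
    rw [hT1def, hT2def]
    rw [sum4_perm (fun i j p q => A⁻¹ i p * (A⁻¹ * S * A⁻¹) j q * gdot A (c i j) (c p q))]
    refine Finset.sum_congr rfl fun i _ => Finset.sum_congr rfl fun j _ =>
      Finset.sum_congr rfl fun p _ => Finset.sum_congr rfl fun q _ => ?_
    rw [hBsym i j p q]; ring
  -- XN = T1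
  have hXN : XN = T1 := by
    rw [hXNdef, hT1def]
    calc (∑ a, ∑ b, ∑ p, ∑ q, A⁻¹ a p * A⁻¹ b q *
        (∑ i, ∑ j, A⁻¹ i j * gdot A (c a i) (c b j)) * S p q)
        = ∑ a, ∑ b, ∑ p, ∑ q, ∑ i, ∑ j,
            A⁻¹ a p * A⁻¹ b q * (A⁻¹ i j * gdot A (c a i) (c b j)) * S p q := by
          simp only [Finset.mul_sum, Finset.sum_mul]
      _ = ∑ a, ∑ i, ∑ b, ∑ j, ∑ q, ∑ p,
            A⁻¹ a p * A⁻¹ b q * (A⁻¹ i j * gdot A (c a i) (c b j)) * S p q :=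
          sum6_perm2 _
      _ = ∑ i, ∑ j, ∑ p, ∑ q,
            (A⁻¹ * S * A⁻¹) i p * A⁻¹ j q * gdot A (c i j) (c p q) := by
          refine Finset.sum_congr rfl fun a _ => Finset.sum_congr rfl fun i _ =>
            Finset.sum_congr rfl fun b _ => Finset.sum_congr rfl fun j _ => ?_
          rw [hgsg a b]
          simp only [Finset.sum_mul]
          refine Finset.sum_congr rfl fun q _ => Finset.sum_congr rfl fun p _ => ?_
          rw [hgs q b]; ring
  -- XP = T3
  have hXP : XP = T3 := by
    rw [hXPdef, hT3def]
    calc (∑ a, ∑ b, ∑ p, ∑ q, A⁻¹ a p * A⁻¹ b q *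
        (∑ i, ∑ j, ∑ x, ∑ y, A⁻¹ i x * A⁻¹ j y *
          (∑ k, c i j k * A k a) * (∑ l, c x y l * A l b)) * S p q)
        = ∑ p, ∑ q, ∑ a, ∑ b, A⁻¹ a p * A⁻¹ b q *
          (∑ i, ∑ j, ∑ x, ∑ y, A⁻¹ i x * A⁻¹ j y *
            (∑ k, c i j k * A k a) * (∑ l, c x y l * A l b)) * S p q :=
          sum4_comm _
      _ = ∑ p, ∑ q, (∑ a, ∑ b, (A⁻¹ a p * A⁻¹ b q *
          (∑ i, ∑ j, ∑ x, ∑ y, A⁻¹ i x * A⁻¹ j y *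
            (∑ k, c i j k * A k a) * (∑ l, c x y l * A l b)))) * S p q := by
          refine Finset.sum_congr rfl fun p _ => Finset.sum_congr rfl fun q _ => ?_
          simp only [Finset.sum_mul]
      _ = ∑ p, ∑ q, (∑ i, ∑ j, ∑ x, ∑ y,
            A⁻¹ i x * A⁻¹ j y * (c i j p * c x y q)) * S p q := by
          refine Finset.sum_congr rfl fun p _ => Finset.sum_congr rfl fun q _ => ?_
          rw [hXin c A hdet p q]
      _ = ∑ p, ∑ q, ∑ i, ∑ j, ∑ x, ∑ y,
            A⁻¹ i x * A⁻¹ j y * (c i j p * c x y q) * S p q := by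
          refine Finset.sum_congr rfl fun p _ => Finset.sum_congr rfl fun q _ => ?_
          simp only [Finset.sum_mul]
      _ = ∑ i, ∑ j, ∑ x, ∑ y, ∑ p, ∑ q,
            A⁻¹ i x * A⁻¹ j y * (c i j p * c x y q) * S p q := sum6_comm _
      _ = ∑ i, ∑ j, ∑ p, ∑ q, A⁻¹ i p * A⁻¹ j q * gdot S (c i j) (c p q) := by
          refine Finset.sum_congr rfl fun i _ => Finset.sum_congr rfl fun j _ =>
            Finset.sum_congr rfl fun x _ => Finset.sum_congr rfl fun y _ => ?_
          simp only [gdot, Finset.mul_sum]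
          exact Finset.sum_congr rfl fun p _ => Finset.sum_congr rfl fun q _ => by ring
  -- RHS decomposition
  have hR : binner A (Ricm c A) S = -(1/2) * XN + (1/4) * XP := by
    rw [hXNdef, hXPdef]
    simp only [binner, Ricm, Matrix.of_apply]
    calc (∑ a, ∑ b, ∑ p, ∑ q, A⁻¹ a p * A⁻¹ b q *
        (-(1/2) * (∑ i, ∑ j, A⁻¹ i j * gdot A (c a i) (c b j))
          + 1/4 * (∑ i, ∑ j, ∑ x, ∑ y, A⁻¹ i x * A⁻¹ j y *
              (∑ k, c i j k * A k a) * (∑ l, c x y l * A l b))) * S p q)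
        = ∑ a, ∑ b, ∑ p, ∑ q,
          (-(1/2) * (A⁻¹ a p * A⁻¹ b q *
              (∑ i, ∑ j, A⁻¹ i j * gdot A (c a i) (c b j)) * S p q)
            + (1/4) * (A⁻¹ a p * A⁻¹ b q *
              (∑ i, ∑ j, ∑ x, ∑ y, A⁻¹ i x * A⁻¹ j y *
                (∑ k, c i j k * A k a) * (∑ l, c x y l * A l b)) * S p q)) := by
          refine Finset.sum_congr rfl fun a _ => Finset.sum_congr rfl fun b _ =>
            Finset.sum_congr rfl fun p _ => Finset.sum_congr rfl fun q _ => by ring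
      _ = -(1/2) * (∑ a, ∑ b, ∑ p, ∑ q, A⁻¹ a p * A⁻¹ b q *
              (∑ i, ∑ j, A⁻¹ i j * gdot A (c a i) (c b j)) * S p q)
          + (1/4) * (∑ a, ∑ b, ∑ p, ∑ q, A⁻¹ a p * A⁻¹ b q *
              (∑ i, ∑ j, ∑ x, ∑ y, A⁻¹ i x * A⁻¹ j y *
                (∑ k, c i j k * A k a) * (∑ l, c x y l * A l b)) * S p q) := by
          simp only [Finset.sum_add_distrib, ← Finset.mul_sum]
  rw [hL, hswap, hR, hXN, hXP]
  ring

end RFNAux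

theorem stmt4 {n : ℕ} (c : Fin n → Fin n → Fin n → ℝ) (hc : IsLieSC c)
    (G : ℝ → Matrix (Fin n) (Fin n) ℝ) (hpd : ∀ t, (G t).PosDef)
    (hsym : ∀ t, (G t).IsSymm)
    (S : Matrix (Fin n) (Fin n) ℝ) (hS : S.IsSymm) (t₀ : ℝ)
    (hder : ∀ i j, HasDerivAt (fun u => G u i j) (S i j) t₀) :
    HasDerivAt (fun u => scalR c (G u)) (-(binner (G t₀) (Ricm c (G t₀)) S)) t₀ := by
  have hdet : ∀ u, IsUnit (G u).det := fun u => isUnit_iff_ne_zero.mpr (ne_of_gt (hpd u).det_pos)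
  have hinv : ∀ i j, HasDerivAt (fun u => (G u)⁻¹ i j)
      ((-((G t₀)⁻¹ * S * (G t₀)⁻¹)) i j) t₀ :=
    RFNAux.hasDerivAt_inv_entry G S t₀ hder hdet
  have hgd : ∀ x y : Fin n → ℝ, HasDerivAt (fun u => gdot (G u) x y) (gdot S x y) t₀ := by
    intro x y
    simp only [gdot]
    apply HasDerivAt.fun_sum; intro k _
    apply HasDerivAt.fun_sum; intro l _
    exact ((hder k l).const_mul (x k)).mul_const (y l)
  have main : HasDerivAt (fun u => ∑ i, ∑ j, ∑ p, ∑ q,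
      (G u)⁻¹ i p * (G u)⁻¹ j q * gdot (G u) (c i j) (c p q))
      (∑ i, ∑ j, ∑ p, ∑ q,
        (((-((G t₀)⁻¹ * S * (G t₀)⁻¹)) i p * (G t₀)⁻¹ j q
            + (G t₀)⁻¹ i p * (-((G t₀)⁻¹ * S * (G t₀)⁻¹)) j q) * gdot (G t₀) (c i j) (c p q)
          + (G t₀)⁻¹ i p * (G t₀)⁻¹ j q * gdot S (c i j) (c p q))) t₀ := by
    apply HasDerivAt.fun_sum; intro i _
    apply HasDerivAt.fun_sum; intro j _
    apply HasDerivAt.fun_sum; intro p _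
    apply HasDerivAt.fun_sum; intro q _
    exact ((hinv i p).mul (hinv j q)).mul (hgd (c i j) (c p q))
  have hfun : (fun u => scalR c (G u)) = fun u => -(1/4) * ∑ i, ∑ j, ∑ p, ∑ q,
      (G u)⁻¹ i p * (G u)⁻¹ j q * gdot (G u) (c i j) (c p q) := rfl
  have final := main.const_mul (-(1/4) : ℝ)
  have hval := RFNAux.keyalg c hc.1 (G t₀) S (hsym t₀) (hdet t₀)
  rw [hfun, ← hval]
  exact final
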